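/- arXiv:2404.14023 — 3 statements merged into one kernel-verified Lean document; each statement's English description precedes it below -/
import Mathlib

section
/- Let A₁, ..., A_m be symmetric n×n real matrices (n ≥ 4), H ≥ 0 with trace A₁ = nH and trace A_α = 0 for α ≥ 2, and let S = ∑_α ‖A_α‖² (Frobenius norms). Fix an integer p with 2 ≤ p ≤ n/2. Define Θ_p = ∑_α ( 2 ∑_{i=1}^p ∑_{j=p+1}^n (A_α)_{ij}² − (∑_{i=1}^p (A_α)_{ii})(∑_{j=p+1}^n (A_α)_{jj}) ). Then Θ_p ≤ (p(n−p)/n) S − 2p(n−p)H² − (n−2p) H ∑_{i=1}^p ((A₁)_{ii} − H). -/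
open Finset

private lemma key_single (n p : ℕ) (hn : 4 ≤ n) (hp : 2 ≤ p) (hpn : 2 * p ≤ n)
    (h : ℝ) (A : Matrix (Fin n) (Fin n) ℝ) (hsym : A.IsSymm)
    (htr : A.trace = (n : ℝ) * h) :
    2 * ∑ i ∈ univ.filter (fun i : Fin n => (i : ℕ) < p),
        ∑ j ∈ univ.filter (fun j : Fin n => p ≤ (j : ℕ)), (A i j) ^ 2
      - (∑ i ∈ univ.filter (fun i : Fin n => (i : ℕ) < p), A i i) *
        (∑ j ∈ univ.filter (fun j : Fin n => p ≤ (j : ℕ)), A j j) ≤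
      ((p : ℝ) * ((n : ℝ) - p) / n) * (∑ i, ∑ j, (A i j) ^ 2)
        - 2 * p * ((n : ℝ) - p) * h ^ 2
        - ((n : ℝ) - 2 * p) * h *
            ∑ i ∈ univ.filter (fun i : Fin n => (i : ℕ) < p), (A i i - h) := by
  have hpltn : p < n := by omega
  have hplen : p ≤ n := by omega
  set P : Finset (Fin n) := univ.filter (fun i : Fin n => (i : ℕ) < p) with hPdef
  set Q : Finset (Fin n) := univ.filter (fun j : Fin n => p ≤ (j : ℕ)) with hQdef
  have hQ' : Q = univ.filter (fun i : Fin n => ¬ (i : ℕ) < p) := by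
    ext i; simp [hQdef, not_lt]
  have hsplit : ∀ f : Fin n → ℝ, ∑ i, f i = ∑ i ∈ P, f i + ∑ i ∈ Q, f i := by
    intro f
    rw [hQ', hPdef, Finset.sum_filter_add_sum_filter_not]
  have cP : P.card = p := by
    have : P = Finset.Iio (⟨p, hpltn⟩ : Fin n) := by
      ext i; simp [hPdef, Fin.lt_def]
    rw [this, Fin.card_Iio]
  have cQ : Q.card = n - p := by
    have : Q = Finset.Ici (⟨p, hpltn⟩ : Fin n) := by
      ext i; simp [hQdef, Fin.le_def]
    rw [this, Fin.card_Ici]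
  have htr' : ∑ i, A i i = (n : ℝ) * h := by
    simpa [Matrix.trace, Matrix.diag] using htr
  set F := ∑ i, ∑ j, (A i j) ^ 2 with hFdef
  set SPP := ∑ i ∈ P, ∑ j ∈ P, (A i j) ^ 2 with hSPP
  set SPQ := ∑ i ∈ P, ∑ j ∈ Q, (A i j) ^ 2 with hSPQdef
  set SQP := ∑ i ∈ Q, ∑ j ∈ P, (A i j) ^ 2 with hSQP
  set SQQ := ∑ i ∈ Q, ∑ j ∈ Q, (A i j) ^ 2 with hSQQ
  set D := ∑ i, (A i i) ^ 2 with hDdef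
  have hF : F = (SPP + SPQ) + (SQP + SQQ) := by
    rw [hFdef, hsplit (fun i => ∑ j, (A i j) ^ 2)]
    congr 1 <;>
    · rw [← Finset.sum_add_distrib]
      exact Finset.sum_congr rfl fun i _ => hsplit _
  have hQPeq : SQP = SPQ := by
    rw [hSQP, Finset.sum_comm, hSPQdef]
    refine Finset.sum_congr rfl fun i _ => Finset.sum_congr rfl fun j _ => ?_
    rw [hsym.apply j i]
  have hdiagP : ∑ i ∈ P, (A i i) ^ 2 ≤ SPP :=
    Finset.sum_le_sum fun i hi => Finset.single_le_sum (fun j _ => sq_nonneg (A i j)) hi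
  have hdiagQ : ∑ i ∈ Q, (A i i) ^ 2 ≤ SQQ :=
    Finset.sum_le_sum fun i hi => Finset.single_le_sum (fun j _ => sq_nonneg (A i j)) hi
  have hD : D = ∑ i ∈ P, (A i i) ^ 2 + ∑ i ∈ Q, (A i i) ^ 2 := hsplit _
  have step1 : 2 * SPQ ≤ F - D := by
    have hSPQnn : 0 ≤ SPQ :=
      Finset.sum_nonneg fun i _ => Finset.sum_nonneg fun j _ => sq_nonneg _
    linarith [hF, hQPeq, hdiagP, hdiagQ, hD]
  have hDF : D ≤ F := by
    have : 0 ≤ 2 * SPQ :=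
      mul_nonneg (by norm_num)
        (Finset.sum_nonneg fun i _ => Finset.sum_nonneg fun j _ => sq_nonneg _)
    linarith
  -- diagonal quantities
  set T := ∑ i ∈ P, A i i with hTdef
  set TQ := ∑ j ∈ Q, A j j with hTQdef
  have htt : T + TQ = (n : ℝ) * h := by rw [hTdef, hTQdef, ← hsplit]; exact htr'
  set e := ∑ i ∈ P, (A i i - h) with hedef
  set pr : ℝ := (p : ℝ) with hprdef
  set qr : ℝ := (n : ℝ) - p with hqrdef
  have hnpq : (n : ℝ) = pr + qr := by rw [hprdef, hqrdef]; ring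
  have hpr2 : (2 : ℝ) ≤ pr := by rw [hprdef]; exact_mod_cast hp
  have hqrp : pr ≤ qr := by
    rw [hprdef, hqrdef]
    have : (2 : ℝ) * p ≤ n := by exact_mod_cast hpn
    linarith
  have hpr0 : 0 ≤ pr := by linarith
  have hqr0 : 0 ≤ qr := by linarith
  have he : e = T - pr * h := by
    rw [hedef, Finset.sum_sub_distrib, Finset.sum_const, cP, nsmul_eq_mul, hTdef, hprdef]
  have heQ : ∑ j ∈ Q, (A j j - h) = TQ - qr * h := by
    rw [Finset.sum_sub_distrib, Finset.sum_const, cQ, nsmul_eq_mul, hTQdef, hqrdef]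
    have : ((n - p : ℕ) : ℝ) = (n : ℝ) - p := by
      rw [Nat.cast_sub hplen]
    rw [this]
  set B := ∑ i, (A i i - h) ^ 2 with hBdef
  have hB : B = ∑ i ∈ P, (A i i - h) ^ 2 + ∑ i ∈ Q, (A i i - h) ^ 2 := hsplit _
  have h2a : e ^ 2 ≤ pr * ∑ i ∈ P, (A i i - h) ^ 2 := by
    have := sq_sum_le_card_mul_sum_sq (s := P) (f := fun i => A i i - h)
    rw [cP] at this
    exact_mod_cast this
  have h2b : (∑ j ∈ Q, (A j j - h)) ^ 2 ≤ qr * ∑ j ∈ Q, (A j j - h) ^ 2 := by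
    have := sq_sum_le_card_mul_sum_sq (s := Q) (f := fun i => A i i - h)
    rw [cQ] at this
    have hc : ((n - p : ℕ) : ℝ) = qr := by
      rw [hqrdef, Nat.cast_sub hplen]
    rw [hc] at this
    exact_mod_cast this
  have hQe : (∑ j ∈ Q, (A j j - h)) = -e := by
    rw [heQ, he]
    have : T + TQ = (pr + qr) * h := by rw [← hnpq]; exact htt
    linarith
  have h2b' : e ^ 2 ≤ qr * ∑ j ∈ Q, (A j j - h) ^ 2 := by
    rw [hQe] at h2b; simpa using h2b
  have h2 : (n : ℝ) * e ^ 2 ≤ pr * qr * B := by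
    have t1 : qr * e ^ 2 ≤ pr * qr * ∑ i ∈ P, (A i i - h) ^ 2 := by
      calc qr * e ^ 2 ≤ qr * (pr * ∑ i ∈ P, (A i i - h) ^ 2) :=
            mul_le_mul_of_nonneg_left h2a hqr0
        _ = pr * qr * ∑ i ∈ P, (A i i - h) ^ 2 := by ring
    have t2 : pr * e ^ 2 ≤ pr * qr * ∑ j ∈ Q, (A j j - h) ^ 2 := by
      calc pr * e ^ 2 ≤ pr * (qr * ∑ j ∈ Q, (A j j - h) ^ 2) :=
            mul_le_mul_of_nonneg_left h2b' hpr0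
        _ = pr * qr * ∑ j ∈ Q, (A j j - h) ^ 2 := by ring
    calc (n : ℝ) * e ^ 2 = qr * e ^ 2 + pr * e ^ 2 := by rw [hnpq]; ring
      _ ≤ pr * qr * ∑ i ∈ P, (A i i - h) ^ 2 + pr * qr * ∑ j ∈ Q, (A j j - h) ^ 2 :=
          add_le_add t1 t2
      _ = pr * qr * B := by rw [hB]; ring
  have hn0 : (0 : ℝ) < n := by positivity
  set c : ℝ := pr * qr / n with hcdef
  have hcn : c * n = pr * qr := by
    rw [hcdef]; field_simp
  have hpq_ge : (n : ℝ) ≤ pr * qr := by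
    have t := mul_le_mul_of_nonneg_right hpr2 hqr0
    linarith
  have hc1 : 1 ≤ c := by
    rw [hcdef]; rw [le_div_iff₀ hn0]; linarith
  have h2' : e ^ 2 ≤ c * B := by
    have hB0 : 0 ≤ B := Finset.sum_nonneg fun i _ => sq_nonneg _
    have : (n : ℝ) * e ^ 2 ≤ (n : ℝ) * (c * B) := by
      have : (n : ℝ) * (c * B) = pr * qr * B := by rw [← mul_assoc, mul_comm (n:ℝ) c, hcn]
      rw [this]; exact h2
    exact le_of_mul_le_mul_left this hn0
  have hBD : B = D - (n : ℝ) * h ^ 2 := by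
    have expand : ∀ i : Fin n, (A i i - h) ^ 2 = (A i i) ^ 2 - A i i * (2 * h) + h ^ 2 :=
      fun i => by ring
    rw [hBdef, Finset.sum_congr rfl (fun i _ => expand i), Finset.sum_add_distrib,
      Finset.sum_sub_distrib, ← Finset.sum_mul, htr', Finset.sum_const, Finset.card_univ,
      Fintype.card_fin, nsmul_eq_mul, hDdef]
    ring
  have hTQe : TQ = qr * h - e := by
    have : T + TQ = (pr + qr) * h := by rw [← hnpq]; exact htt
    linarith [this, he]
  -- final assembly
  have hgoal : 2 * SPQ - T * TQ ≤ c * F - 2 * pr * qr * h ^ 2 - (qr - pr) * h * e := by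
    have hprod : 0 ≤ (c - 1) * (F - D) :=
      mul_nonneg (by linarith) (by linarith)
    have hprod' : (c - 1) * (F - D) = c * F - c * D - F + D := by ring
    have h3 : c * B = c * D - pr * qr * h ^ 2 := by
      rw [hBD, mul_sub, ← mul_assoc, hcn]
    have hTT : T * TQ = pr * qr * h ^ 2 + (qr - pr) * h * e - e ^ 2 := by
      rw [hTQe, he]; ring
    linarith [hprod, hprod', h2', step1, h3, hTT]
  have hnn2p : (n : ℝ) - 2 * p = qr - pr := by rw [hqrdef, hprdef]; ring
  calc 2 * SPQ - T * TQ ≤ c * F - 2 * pr * qr * h ^ 2 - (qr - pr) * h * e := hgoal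
    _ = ((p : ℝ) * ((n : ℝ) - p) / n) * F - 2 * p * ((n : ℝ) - p) * h ^ 2
        - ((n : ℝ) - 2 * p) * h * e := by
      rw [hnn2p, hcdef, hprdef, hqrdef]

/-- Matrix formulation of estimate (15) in Proposition 3. -/
theorem theta_p_second_estimate (n m p : ℕ) (hn : 4 ≤ n) (hp : 2 ≤ p)
    (hpn : 2 * p ≤ n) (H S : ℝ) (hH : 0 ≤ H)
    (A : Fin (m + 1) → Matrix (Fin n) (Fin n) ℝ)
    (hsym : ∀ α, (A α).IsSymm)
    (htr1 : (A 0).trace = (n : ℝ) * H)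
    (htr : ∀ α, α ≠ 0 → (A α).trace = 0)
    (hS : S = ∑ α, ∑ i, ∑ j, (A α i j) ^ 2) :
    (∑ α, (2 * ∑ i ∈ univ.filter (fun i : Fin n => (i : ℕ) < p),
        ∑ j ∈ univ.filter (fun j : Fin n => p ≤ (j : ℕ)), (A α i j) ^ 2
      - (∑ i ∈ univ.filter (fun i : Fin n => (i : ℕ) < p), A α i i) *
        (∑ j ∈ univ.filter (fun j : Fin n => p ≤ (j : ℕ)), A α j j))) ≤
      ((p : ℝ) * ((n : ℝ) - p) / n) * S - 2 * p * ((n : ℝ) - p) * H ^ 2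
        - ((n : ℝ) - 2 * p) * H *
            ∑ i ∈ univ.filter (fun i : Fin n => (i : ℕ) < p), (A 0 i i - H) := by
  set hh : Fin (m + 1) → ℝ := fun α => if α = 0 then H else 0 with hhdef
  set C : ℝ := 2 * p * ((n : ℝ) - p) * H ^ 2
      + ((n : ℝ) - 2 * p) * H *
          ∑ i ∈ univ.filter (fun i : Fin n => (i : ℕ) < p), (A 0 i i - H) with hCdef
  have key : ∀ α : Fin (m + 1),
      2 * ∑ i ∈ univ.filter (fun i : Fin n => (i : ℕ) < p),
          ∑ j ∈ univ.filter (fun j : Fin n => p ≤ (j : ℕ)), (A α i j) ^ 2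
        - (∑ i ∈ univ.filter (fun i : Fin n => (i : ℕ) < p), A α i i) *
          (∑ j ∈ univ.filter (fun j : Fin n => p ≤ (j : ℕ)), A α j j) ≤
      ((p : ℝ) * ((n : ℝ) - p) / n) * (∑ i, ∑ j, (A α i j) ^ 2)
        - (if α = 0 then C else 0) := by
    intro α
    by_cases hα : α = 0
    · subst hα
      have := key_single n p hn hp hpn H (A 0) (hsym 0) htr1
      rw [if_pos rfl, hCdef]
      linarith [this]
    · have htr0 : (A α).trace = (n : ℝ) * 0 := by rw [htr α hα]; ring
      have := key_single n p hn hp hpn 0 (A α) (hsym α) htr0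
      simp only [if_neg hα]
      have h0 : (0:ℝ) ^ 2 = 0 := by norm_num
      calc 2 * ∑ i ∈ univ.filter (fun i : Fin n => (i : ℕ) < p),
          ∑ j ∈ univ.filter (fun j : Fin n => p ≤ (j : ℕ)), (A α i j) ^ 2
        - (∑ i ∈ univ.filter (fun i : Fin n => (i : ℕ) < p), A α i i) *
          (∑ j ∈ univ.filter (fun j : Fin n => p ≤ (j : ℕ)), A α j j)
          ≤ ((p : ℝ) * ((n : ℝ) - p) / n) * (∑ i, ∑ j, (A α i j) ^ 2)
            - 2 * p * ((n : ℝ) - p) * (0:ℝ) ^ 2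
            - ((n : ℝ) - 2 * p) * 0 *
              ∑ i ∈ univ.filter (fun i : Fin n => (i : ℕ) < p), (A α i i - 0) := this
        _ = ((p : ℝ) * ((n : ℝ) - p) / n) * (∑ i, ∑ j, (A α i j) ^ 2) - 0 := by ring
  calc (∑ α, (2 * ∑ i ∈ univ.filter (fun i : Fin n => (i : ℕ) < p),
        ∑ j ∈ univ.filter (fun j : Fin n => p ≤ (j : ℕ)), (A α i j) ^ 2
      - (∑ i ∈ univ.filter (fun i : Fin n => (i : ℕ) < p), A α i i) *
        (∑ j ∈ univ.filter (fun j : Fin n => p ≤ (j : ℕ)), A α j j)))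
      ≤ ∑ α, (((p : ℝ) * ((n : ℝ) - p) / n) * (∑ i, ∑ j, (A α i j) ^ 2)
          - (if α = 0 then C else 0)) := Finset.sum_le_sum fun α _ => key α
    _ = ((p : ℝ) * ((n : ℝ) - p) / n) * S - C := by
        rw [Finset.sum_sub_distrib, ← Finset.mul_sum, ← hS,
          Finset.sum_ite_eq' univ (0 : Fin (m + 1)) (fun _ => C)]
        simp
    _ = ((p : ℝ) * ((n : ℝ) - p) / n) * S - 2 * p * ((n : ℝ) - p) * H ^ 2
        - ((n : ℝ) - 2 * p) * H *
            ∑ i ∈ univ.filter (fun i : Fin n => (i : ℕ) < p), (A 0 i i - H) := by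
        rw [hCdef]; ring
end

section
/- Let A₁, ..., A_m be symmetric n×n real matrices, n ≥ 4, with trace A₁ = nH (H ≥ 0) and trace A_α = 0 for α ≥ 2. For a unit coordinate vector e_i define Ric(e_i) = (n−1)c + nH (A₁)_{ii} − ∑_α ‖A_α e_i‖², where c is a fixed real number. Fix p with 2 ≤ p ≤ n/2 and let Θ_p be as in the Lawson–Simons quantity. Then Θ_p ≤ p ∑_{i=1}^p ((n−1)(c+H²) − Ric(e_i)) − p(n−p)H² + (p−1) n H ∑_{i=1}^p ((A₁)_{ii} − H). -/
open Finset

/-- Matrix formulation of estimate (8) in Proposition 3, where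
`Ric(e_i) = (n−1)c + nH (A₁)_{ii} − ∑_α ‖A_α e_i‖²`. -/
theorem theta_p_first_estimate (n m p : ℕ) (hn : 4 ≤ n) (hp : 2 ≤ p)
    (hpn : 2 * p ≤ n) (c H : ℝ) (hH : 0 ≤ H)
    (A : Fin (m + 1) → Matrix (Fin n) (Fin n) ℝ)
    (hsym : ∀ α, (A α).IsSymm)
    (htr1 : (A 0).trace = (n : ℝ) * H)
    (htr : ∀ α, α ≠ 0 → (A α).trace = 0)
    (Ric : Fin n → ℝ)
    (hRic : ∀ i, Ric i =
      ((n : ℝ) - 1) * c + (n : ℝ) * H * A 0 i i - ∑ α, ∑ j, (A α i j) ^ 2) :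
    (∑ α, (2 * ∑ i ∈ univ.filter (fun i : Fin n => (i : ℕ) < p),
        ∑ j ∈ univ.filter (fun j : Fin n => p ≤ (j : ℕ)), (A α i j) ^ 2
      - (∑ i ∈ univ.filter (fun i : Fin n => (i : ℕ) < p), A α i i) *
        (∑ j ∈ univ.filter (fun j : Fin n => p ≤ (j : ℕ)), A α j j))) ≤
      (p : ℝ) * (∑ i ∈ univ.filter (fun i : Fin n => (i : ℕ) < p),
          (((n : ℝ) - 1) * (c + H ^ 2) - Ric i))
        - (p : ℝ) * ((n : ℝ) - p) * H ^ 2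
        + ((p : ℝ) - 1) * (n : ℝ) * H *
            ∑ i ∈ univ.filter (fun i : Fin n => (i : ℕ) < p), (A 0 i i - H) := by
  have hpn' : p ≤ n := by omega
  set P := univ.filter (fun i : Fin n => (i : ℕ) < p) with hPdef
  set Q := univ.filter (fun j : Fin n => p ≤ (j : ℕ)) with hQdef
  have hQ' : Q = univ.filter (fun j : Fin n => ¬ (j : ℕ) < p) := by
    simp [hQdef, not_lt]
  have hcardP : P.card = p := by
    have hPeq : P = (Finset.range p).attachFin
        (fun k hk => lt_of_lt_of_le (Finset.mem_range.mp hk) hpn') := by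
      ext i
      simp [hPdef, Finset.mem_attachFin]
    rw [hPeq, Finset.card_attachFin, Finset.card_range]
  have hsplit : ∀ f : Fin n → ℝ, ∑ j ∈ P, f j + ∑ j ∈ Q, f j = ∑ j, f j := by
    intro f
    rw [hQ']
    exact Finset.sum_filter_add_sum_filter_not univ _ f
  -- abbreviations
  set S : Fin (m + 1) → ℝ := fun α => ∑ i ∈ P, A α i i with hS
  set O : Fin (m + 1) → ℝ := fun α => ∑ i ∈ P, ∑ j ∈ Q, (A α i j) ^ 2 with hO
  set F : Fin (m + 1) → ℝ := fun α => ∑ i ∈ P, ∑ j, (A α i j) ^ 2 with hF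
  have htrace : ∀ α, (A α).trace = ∑ i, A α i i := by
    intro α; simp [Matrix.trace, Matrix.diag]
  have hT : ∀ α, ∑ j ∈ Q, A α j j = (A α).trace - S α := by
    intro α
    have := hsplit (fun j => A α j j)
    rw [htrace α]
    simp only [hS] at *
    linarith
  -- key inequality per α
  have hkey : ∀ α, 2 * O α + S α ^ 2 ≤ (p : ℝ) * F α := by
    intro α
    have hCS : S α ^ 2 ≤ (p : ℝ) * ∑ i ∈ P, (A α i i) ^ 2 := by
      have h := sq_sum_le_card_mul_sum_sq (s := P) (f := fun i => A α i i)
      rw [hcardP] at h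
      exact_mod_cast h
    have hdiag : ∑ i ∈ P, (A α i i) ^ 2 ≤ ∑ i ∈ P, ∑ j ∈ P, (A α i j) ^ 2 :=
      Finset.sum_le_sum fun i hi =>
        Finset.single_le_sum (fun j _ => sq_nonneg (A α i j)) hi
    have hFsplit : F α = (∑ i ∈ P, ∑ j ∈ P, (A α i j) ^ 2) + O α := by
      simp only [hF, hO]
      rw [← Finset.sum_add_distrib]
      exact Finset.sum_congr rfl fun i _ => (hsplit fun j => (A α i j) ^ 2).symm
    have hOnn : 0 ≤ O α := by
      apply Finset.sum_nonneg
      intro i _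
      exact Finset.sum_nonneg fun j _ => sq_nonneg _
    have hp2 : (2 : ℝ) ≤ (p : ℝ) := by exact_mod_cast hp
    nlinarith [mul_nonneg (sub_nonneg.mpr hp2) hOnn]
  -- rewrite LHS
  have hLHS : (∑ α, (2 * ∑ i ∈ P, ∑ j ∈ Q, (A α i j) ^ 2
      - (∑ i ∈ P, A α i i) * (∑ j ∈ Q, A α j j)))
      = (∑ α, (2 * O α + S α ^ 2)) - (n : ℝ) * H * S 0 := by
    have h1 : ∀ α, 2 * ∑ i ∈ P, ∑ j ∈ Q, (A α i j) ^ 2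
        - (∑ i ∈ P, A α i i) * (∑ j ∈ Q, A α j j)
        = 2 * O α + S α ^ 2 - S α * (A α).trace := by
      intro α
      rw [hT α]
      simp only [hO, hS]
      ring
    rw [Finset.sum_congr rfl fun α _ => h1 α, Finset.sum_sub_distrib]
    congr 1
    rw [Fin.sum_univ_succ]
    have h2 : ∀ i : Fin m, S i.succ * (A i.succ).trace = 0 := by
      intro i
      rw [htr i.succ (Fin.succ_ne_zero i), mul_zero]
    rw [Finset.sum_congr rfl fun i _ => h2 i, htr1]
    simp [mul_comm]
  rw [hLHS]
  -- rewrite RHS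
  have hRicP : ∀ i, ((n : ℝ) - 1) * (c + H ^ 2) - Ric i
      = ((n : ℝ) - 1) * H ^ 2 - (n : ℝ) * H * A 0 i i + ∑ α, ∑ j, (A α i j) ^ 2 := by
    intro i
    rw [hRic i]
    ring
  have hsum1 : ∑ i ∈ P, (((n : ℝ) - 1) * (c + H ^ 2) - Ric i)
      = (p : ℝ) * (((n : ℝ) - 1) * H ^ 2) - (n : ℝ) * H * S 0 + ∑ α, F α := by
    rw [Finset.sum_congr rfl fun i _ => hRicP i, Finset.sum_add_distrib,
      Finset.sum_sub_distrib, Finset.sum_const, hcardP, Finset.sum_comm]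
    simp only [hF, hS, nsmul_eq_mul, Finset.mul_sum]
  have hsum2 : ∑ i ∈ P, (A 0 i i - H) = S 0 - (p : ℝ) * H := by
    rw [Finset.sum_sub_distrib, Finset.sum_const, hcardP]
    simp [hS]
  rw [hsum1, hsum2]
  have hmain : ∑ α, (2 * O α + S α ^ 2) ≤ (p : ℝ) * ∑ α, F α := by
    rw [Finset.mul_sum]
    exact Finset.sum_le_sum fun α _ => hkey α
  nlinarith [hmain]
end

section
/- Let A₁,...,A_m be symmetric n×n real matrices (n ≥ 4), c < 0, H ≥ 0, with trace A₁ = nH, trace A_α = 0 for α ≥ 2. For a unit vector e₁ define Ric(e₁) = (n−1)c + nH(A₁)₁₁ − ∑_α ‖A_α e₁‖², set ‖φ‖² = ∑_α ‖A_α‖² − nH², and suppose ‖φ‖² ≤ (2n/(n+2))((n+1)c + (n−1)H²) and Ric(e₁) > (1/(n+2))((n²−n−4)c + n(n−1)H²). Then ∑_{j=2}^n ( 2∑_α (A_α)₁ⱼ² − ∑_α (A_α)₁₁ (A_α)ⱼⱼ ) < (n+1)c. Moreover the identity ∑_{j=2}^n (2∑_α (A_α)₁ⱼ² − ∑_α (A_α)₁₁(A_α)ⱼⱼ)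 = ∑_{j=2}^n ‖φ(e₁,e_j)‖² + (n−1)c − Ric(e₁) holds, where φ(e₁,e_j) has components (A_α)₁ⱼ − δ₁ⱼ H δ_{α1}. -/
open Finset

/-- Matrix formulation of the computation in Lemma 4: under the pinching
hypotheses, the Lawson–Simons quantity `Θ₁` for `p = 1` is `< (n+1)c`, and it
equals `∑_{j≥2} ‖φ(e₁,e_j)‖² + (n−1)c − Ric(e₁)`, where `φ` has components
`(A_α)₁ⱼ − δ₁ⱼ H δ_{α1}`. -/
theorem lemma4_theta1_estimate (n m : ℕ) (hn : 4 ≤ n) (hnpos : 0 < n)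
    (c H : ℝ) (hc : c < 0) (hH : 0 ≤ H)
    (A : Fin (m + 1) → Matrix (Fin n) (Fin n) ℝ)
    (hsym : ∀ α, (A α).IsSymm)
    (htr1 : (A 0).trace = (n : ℝ) * H)
    (htr : ∀ α, α ≠ 0 → (A α).trace = 0)
    (φsq Ric1 : ℝ)
    (hφsq : φsq = (∑ α, ∑ i, ∑ j, (A α i j) ^ 2) - (n : ℝ) * H ^ 2)
    (hRic1 : Ric1 = ((n : ℝ) - 1) * c
      + (n : ℝ) * H * A 0 ⟨0, hnpos⟩ ⟨0, hnpos⟩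
      - ∑ α, ∑ j, (A α ⟨0, hnpos⟩ j) ^ 2)
    (hpinch1 : φsq ≤ (2 * (n : ℝ) / ((n : ℝ) + 2)) *
      (((n : ℝ) + 1) * c + ((n : ℝ) - 1) * H ^ 2))
    (hpinch2 : Ric1 > (1 / ((n : ℝ) + 2)) *
      (((n : ℝ) ^ 2 - n - 4) * c + (n : ℝ) * ((n : ℝ) - 1) * H ^ 2)) :
    (∑ j ∈ univ.filter (fun j : Fin n => j ≠ ⟨0, hnpos⟩),
        (2 * ∑ α, (A α ⟨0, hnpos⟩ j) ^ 2
          - ∑ α, A α ⟨0, hnpos⟩ ⟨0, hnpos⟩ * A α j j)) < ((n : ℝ) + 1) * c ∧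
    (∑ j ∈ univ.filter (fun j : Fin n => j ≠ ⟨0, hnpos⟩),
        (2 * ∑ α, (A α ⟨0, hnpos⟩ j) ^ 2
          - ∑ α, A α ⟨0, hnpos⟩ ⟨0, hnpos⟩ * A α j j)) =
      (∑ j ∈ univ.filter (fun j : Fin n => j ≠ ⟨0, hnpos⟩),
          ∑ α, (A α ⟨0, hnpos⟩ j
            - (if j = ⟨0, hnpos⟩ ∧ α = 0 then H else 0)) ^ 2)
        + ((n : ℝ) - 1) * c - Ric1 := by
  set e : Fin n := ⟨0, hnpos⟩ with he
  have hfilter : (univ.filter (fun j : Fin n => j ≠ e)) = univ.erase e :=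
    filter_ne' univ e
  set S : ℝ := ∑ j ∈ univ.erase e, ∑ α, (A α e j) ^ 2 with hS
  set P : ℝ := ∑ α, (A α e e) ^ 2 with hP
  set Q : ℝ := (n : ℝ) * H * A 0 e e with hQ
  -- the φ-sum equals S
  have hRHSsum : (∑ j ∈ univ.filter (fun j : Fin n => j ≠ e),
      ∑ α, (A α e j - (if j = e ∧ α = 0 then H else 0)) ^ 2) = S := by
    rw [hfilter]
    refine sum_congr rfl fun j hj => sum_congr rfl fun α _ => ?_
    rw [if_neg (fun h => (mem_erase.mp hj).1 h.1), sub_zero]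
  -- sum of products identity
  have h1 : (∑ j ∈ univ.erase e, ∑ α, A α e e * A α j j) = Q - P := by
    rw [sum_comm]
    have step : ∀ α : Fin (m + 1), (∑ j ∈ univ.erase e, A α e e * A α j j)
        = A α e e * (A α).trace - (A α e e) ^ 2 := by
      intro α
      rw [← mul_sum, sum_erase_eq_sub (mem_univ e)]
      have : (A α).trace = ∑ j, A α j j := rfl
      rw [← this]; ring
    rw [sum_congr rfl fun α _ => step α, sum_sub_distrib, ← hP]
    congr 1
    rw [Fintype.sum_eq_single (0 : Fin (m + 1))
      (fun β hβ => by rw [htr β hβ, mul_zero]), htr1, hQ]; ring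
  -- decomposition of the Ricci sum
  have h2 : (∑ α, ∑ j, (A α e j) ^ 2) = P + S := by
    have step : ∀ α : Fin (m + 1), (∑ j, (A α e j) ^ 2)
        = (A α e e) ^ 2 + ∑ j ∈ univ.erase e, (A α e j) ^ 2 :=
      fun α => (add_sum_erase univ _ (mem_univ e)).symm
    rw [sum_congr rfl fun α _ => step α, sum_add_distrib, ← hP, sum_comm, ← hS]
  -- the Theta sum
  have hTheta : (∑ j ∈ univ.filter (fun j : Fin n => j ≠ e),
      (2 * ∑ α, (A α e j) ^ 2 - ∑ α, A α e e * A α j j)) = 2 * S - (Q - P) := by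
    rw [hfilter, sum_sub_distrib, ← mul_sum, ← hS, h1]
  have hRic : Ric1 = ((n : ℝ) - 1) * c + Q - (P + S) := by
    rw [hRic1, h2, hQ]
  -- identity (second conjunct)
  have hident : (∑ j ∈ univ.filter (fun j : Fin n => j ≠ e),
      (2 * ∑ α, (A α e j) ^ 2 - ∑ α, A α e e * A α j j)) =
      (∑ j ∈ univ.filter (fun j : Fin n => j ≠ e),
          ∑ α, (A α e j - (if j = e ∧ α = 0 then H else 0)) ^ 2)
        + ((n : ℝ) - 1) * c - Ric1 := by
    rw [hTheta, hRHSsum, hRic]; ring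
  -- bound 2S ≤ φsq
  have hperα : ∀ α : Fin (m + 1),
      2 * (∑ j ∈ univ.erase e, (A α e j) ^ 2) + ∑ i, (A α i i) ^ 2
        ≤ ∑ i, ∑ j, (A α i j) ^ 2 := by
    intro α
    have hsplit : (∑ i, ∑ j, (A α i j) ^ 2)
        = (∑ j, (A α e j) ^ 2) + ∑ i ∈ univ.erase e, ∑ j, (A α i j) ^ 2 :=
      (add_sum_erase univ _ (mem_univ e)).symm
    have hrow : (∑ j, (A α e j) ^ 2)
        = (A α e e) ^ 2 + ∑ j ∈ univ.erase e, (A α e j) ^ 2 :=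
      (add_sum_erase univ _ (mem_univ e)).symm
    have hrest : ∀ i ∈ univ.erase e,
        (A α e i) ^ 2 + (A α i i) ^ 2 ≤ ∑ j, (A α i j) ^ 2 := by
      intro i hi
      have hne : e ≠ i := fun h => (mem_erase.mp hi).1 h.symm
      have hpair : (∑ j ∈ ({e, i} : Finset (Fin n)), (A α i j) ^ 2)
          = (A α i e) ^ 2 + (A α i i) ^ 2 := sum_pair hne
      have hsub : (∑ j ∈ ({e, i} : Finset (Fin n)), (A α i j) ^ 2)
          ≤ ∑ j, (A α i j) ^ 2 :=
        sum_le_sum_of_subset_of_nonneg (subset_univ _)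
          (fun j _ _ => sq_nonneg _)
      have hsy : A α i e = A α e i := (hsym α).apply e i
      rw [hpair, hsy] at hsub
      exact hsub
    have hdiag : (∑ i ∈ univ.erase e, (A α i i) ^ 2)
        = (∑ i, (A α i i) ^ 2) - (A α e e) ^ 2 := sum_erase_eq_sub (mem_univ e)
    have hge : (∑ i ∈ univ.erase e, ((A α e i) ^ 2 + (A α i i) ^ 2))
        ≤ ∑ i ∈ univ.erase e, ∑ j, (A α i j) ^ 2 := sum_le_sum hrest
    rw [sum_add_distrib, hdiag] at hge
    rw [hsplit, hrow]
    linarith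
  have hφ : 2 * S ≤ φsq := by
    have hsum : ∑ α : Fin (m + 1),
        (2 * (∑ j ∈ univ.erase e, (A α e j) ^ 2) + ∑ i, (A α i i) ^ 2)
        ≤ ∑ α, ∑ i, ∑ j, (A α i j) ^ 2 := sum_le_sum fun α _ => hperα α
    rw [sum_add_distrib, ← mul_sum] at hsum
    have hS' : (∑ α : Fin (m + 1), ∑ j ∈ univ.erase e, (A α e j) ^ 2) = S :=
      Finset.sum_comm
    have hdiag0 : ((n : ℝ) * H) ^ 2 ≤ (n : ℝ) * ∑ i, (A 0 i i) ^ 2 := by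
      have := sq_sum_le_card_mul_sum_sq (s := (univ : Finset (Fin n)))
        (f := fun i => A 0 i i)
      simpa [Matrix.trace, Matrix.diag, ← htr1] using this
    have hD : (∑ i, (A 0 i i) ^ 2)
        ≤ ∑ α : Fin (m + 1), ∑ i, (A α i i) ^ 2 :=
      single_le_sum (f := fun α : Fin (m + 1) => ∑ i, (A α i i) ^ 2)
        (fun α _ => sum_nonneg fun i _ => sq_nonneg _) (mem_univ 0)
    have hnR : (0 : ℝ) < n := by exact_mod_cast hnpos
    have hH2 : (n : ℝ) * H ^ 2 ≤ ∑ i, (A 0 i i) ^ 2 := by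
      nlinarith [hdiag0]
    rw [hS'] at hsum
    rw [hφsq]
    linarith
  -- clear denominators in pinching hypotheses
  have hn2 : (0 : ℝ) < (n : ℝ) + 2 := by positivity
  have hp1' : φsq * ((n : ℝ) + 2)
      ≤ 2 * (n : ℝ) * (((n : ℝ) + 1) * c + ((n : ℝ) - 1) * H ^ 2) := by
    rw [div_mul_eq_mul_div] at hpinch1
    exact (le_div_iff₀ hn2).mp hpinch1
  have hp2' : ((n : ℝ) ^ 2 - n - 4) * c + (n : ℝ) * ((n : ℝ) - 1) * H ^ 2
      < Ric1 * ((n : ℝ) + 2) := by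
    rw [one_div, inv_mul_eq_div] at hpinch2
    exact (div_lt_iff₀ hn2).mp hpinch2
  have hTheta' : (∑ j ∈ univ.filter (fun j : Fin n => j ≠ e),
      (2 * ∑ α, (A α e j) ^ 2 - ∑ α, A α e e * A α j j))
      = S + ((n : ℝ) - 1) * c - Ric1 := by rw [hident, hRHSsum]
  refine ⟨?_, hident⟩
  rw [hTheta']
  nlinarith [hp1', hp2', mul_le_mul_of_nonneg_right hφ hn2.le, hn2]
end
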